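/- arXiv:2108.09876 — 11 statements merged into one kernel-verified Lean document; each statement's English description precedes it below -/
import Mathlib

section
/- Two consistent Boolean formulas over the same finite variable set are logically equivalent if and only if they have the same set of boundary rules (b-rules). -/
variable {V : Type*} [Fintype V] [DecidableEq V]

/-- Flip the value of variable `x` in world `ω`. -/
def flipAt (ω : V → Bool) (x : V) : V → Bool := Function.update ω x (!(ω x))

/-- `ω` is an `ℓ`-boundary model of `φ`, where `ℓ` is the literal `(x, ω x)` contained in `ω`;
equivalently, `φ` has the b-rule whose antecedent is `ω` restricted away from `x` and whose
consequent is the literal `(x, ω x)`. -/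
def HasBRule (φ : (V → Bool) → Prop) (ω : V → Bool) (x : V) : Prop :=
  φ ω ∧ ¬ φ (flipAt ω x)

/-- The set of b-rules of `φ`, encoded as pairs `(ω, x)` where the antecedent is `ω` off `x`
and the consequent is the literal `(x, ω x)`. -/
def BRules (φ : (V → Bool) → Prop) : Set ((V → Bool) × V) :=
  {p | HasBRule φ p.1 p.2}

/-- `∀ℓ·φ := (ℓ ∨ φ|¬ℓ) ∧ (φ|ℓ)` for the literal `ℓ = (x, b)`. -/
def forallLit (φ : (V → Bool) → Prop) (x : V) (b : Bool) : (V → Bool) → Prop :=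
  fun ω => (ω x = b ∨ φ (Function.update ω x (!b))) ∧ φ (Function.update ω x b)

/-- `∃ℓ·φ := (φ|ℓ) ∨ (¬ℓ ∧ φ|¬ℓ)` for the literal `ℓ = (x, b)`. -/
def existsLit (φ : (V → Bool) → Prop) (x : V) (b : Bool) : (V → Bool) → Prop :=
  fun ω => φ (Function.update ω x b) ∨ (ω x = !b ∧ φ (Function.update ω x (!b)))

/-- `φ` is independent of the literal `(x, b)`: any model containing the literal stays a
model when that literal is flipped. -/
def IndepLit (φ : (V → Bool) → Prop) (x : V) (b : Bool) : Prop :=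
  ∀ ω : V → Bool, ω x = b → φ ω → φ (Function.update ω x (!b))

/-- Successive universal literal quantification `∀ℓ₁,…,ℓₙ·φ`. -/
def forallLits (φ : (V → Bool) → Prop) : List (V × Bool) → ((V → Bool) → Prop)
  | [] => φ
  | p :: L => forallLit (forallLits φ L) p.1 p.2

omit [Fintype V] in
lemma flipAt_flipAt (ω : V → Bool) (x : V) : flipAt (flipAt ω x) x = ω := by
  funext y
  by_cases h : y = x
  · subst h; simp [flipAt]
  · simp [flipAt, Function.update_of_ne h]

/-- If b-rule sets agree and `φ ω ∧ ¬ψ ω`, the disagreement persists under any flip. -/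
lemma step (φ ψ : (V → Bool) → Prop) (h : BRules φ = BRules ψ)
    (ω : V → Bool) (hφω : φ ω) (hψω : ¬ ψ ω) (x : V) :
    φ (flipAt ω x) ∧ ¬ ψ (flipAt ω x) := by
  have hmem : ∀ ω' x', HasBRule φ ω' x' ↔ HasBRule ψ ω' x' := by
    intro ω' x'
    have := Set.ext_iff.mp h (ω', x')
    exact this
  constructor
  · by_contra hflip
    have : HasBRule φ ω x := ⟨hφω, hflip⟩
    exact hψω ((hmem ω x).mp this).1
  · intro hψf
    have hb : HasBRule ψ (flipAt ω x) x := by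
      refine ⟨hψf, ?_⟩
      rw [flipAt_flipAt]
      exact hψω
    have := ((hmem _ _).mpr hb).2
    rw [flipAt_flipAt] at this
    exact this hφω

lemma propagate (φ ψ : (V → Bool) → Prop) (h : BRules φ = BRules ψ)
    (ω : V → Bool) (hφω : φ ω) (hψω : ¬ ψ ω) :
    ∀ ω' : V → Bool, φ ω' ∧ ¬ ψ ω' := by
  intro ω'
  have key : ∀ n : ℕ, ∀ ω' : V → Bool,
      (Finset.univ.filter (fun x => ω x ≠ ω' x)).card = n → φ ω' ∧ ¬ ψ ω' := by
    intro n
    induction n with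
    | zero =>
      intro ω' hcard
      have : ω = ω' := by
        funext y
        by_contra hy
        have : y ∈ Finset.univ.filter (fun x => ω x ≠ ω' x) := by
          simp [hy]
        rw [Finset.card_eq_zero.mp hcard] at this
        exact absurd this (Finset.notMem_empty y)
      exact this ▸ ⟨hφω, hψω⟩
    | succ n ih =>
      intro ω' hcard
      have hne : (Finset.univ.filter (fun x => ω x ≠ ω' x)).Nonempty := by
        rw [← Finset.card_pos, hcard]; omega
      obtain ⟨x, hx⟩ := hne
      have hωx : ω x ≠ ω' x := by simpa using hx
      set ω'' := flipAt ω' x with hω''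
      have hdiff : Finset.univ.filter (fun y => ω y ≠ ω'' y)
          = (Finset.univ.filter (fun y => ω y ≠ ω' y)).erase x := by
        ext y
        by_cases hyx : y = x
        · subst hyx
          simp only [Finset.mem_filter, Finset.mem_univ, true_and, Finset.mem_erase,
            ne_eq, not_true_eq_false, false_and, iff_false, not_not]
          simp only [hω'', flipAt, Function.update_self]
          cases hb : ω' y <;> cases hb2 : ω y <;> simp_all
        · simp only [Finset.mem_filter, Finset.mem_univ, true_and, Finset.mem_erase, ne_eq,
            hyx, not_false_eq_true, true_and]
          have : ω'' y = ω' y := by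
            simp [hω'', flipAt, Function.update_of_ne hyx]
          rw [this]
      have hcard'' : (Finset.univ.filter (fun y => ω y ≠ ω'' y)).card = n := by
        rw [hdiff, Finset.card_erase_of_mem hx, hcard]; omega
      obtain ⟨h1, h2⟩ := ih ω'' hcard''
      have := step φ ψ h ω'' h1 h2 x
      rw [hω'', flipAt_flipAt] at this
      exact this
  exact key _ ω' rfl

/-- Two consistent formulas are equivalent iff they have the same set of b-rules. -/
theorem equiv_iff_brules_eq (φ ψ : (V → Bool) → Prop)
    (hφ : ∃ ω : V → Bool, φ ω) (hψ : ∃ ω : V → Bool, ψ ω) :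
    (∀ ω : V → Bool, φ ω ↔ ψ ω) ↔ BRules φ = BRules ψ := by
  constructor
  · intro heq
    ext ⟨ω, x⟩
    simp only [BRules, Set.mem_setOf_eq, HasBRule]
    rw [heq ω, heq (flipAt ω x)]
  · intro h ω
    constructor
    · intro hφω
      by_contra hψω
      obtain ⟨ω₀, hω₀⟩ := hψ
      exact (propagate φ ψ h ω hφω hψω ω₀).2 hω₀
    · intro hψω
      by_contra hφω
      obtain ⟨ω₀, hω₀⟩ := hφ
      have h' : BRules ψ = BRules φ := h.symm
      exact (propagate ψ φ h' ω hψω hφω ω₀).2 hω₀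
end

section
/- For literal ℓ and formula φ, the universal literal quantification ∀ℓ·φ entails φ; moreover, a world ω is a model of φ but not of ∀ℓ·φ if and only if ω is a ¬ℓ-boundary model of φ. -/
variable {V : Type*} [Fintype V] [DecidableEq V]

/-- `∀ℓ·φ` entails `φ`; moreover `ω ⊨ φ` and `ω ⊭ ∀ℓ·φ` iff `ω` is a `¬ℓ`-boundary
model of `φ` (for `ℓ = (x, b)`). -/
theorem forallLit_semantics (φ : (V → Bool) → Prop) (x : V) (b : Bool) :
    (∀ ω : V → Bool, forallLit φ x b ω → φ ω) ∧
    (∀ ω : V → Bool, (φ ω ∧ ¬ forallLit φ x b ω) ↔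
      (ω x = !b ∧ φ ω ∧ ¬ φ (Function.update ω x b))) := by
  have key : ∀ ω : V → Bool, ω x = b ∨ ω x = !b := by
    intro ω; cases h : ω x <;> cases b <;> simp_all
  constructor
  · intro ω hf
    rcases key ω with h | h
    · have : Function.update ω x b = ω := by rw [← h]; exact Function.update_eq_self x ω
      rw [← this]; exact hf.2
    · have : Function.update ω x (!b) = ω := by rw [← h]; exact Function.update_eq_self x ω
      rcases hf.1 with h' | h'
      · rw [h] at h'; simp at h'
      · rwa [this] at h'
  · intro ω
    rcases key ω with h | h
    · have e : Function.update ω x b = ω := by rw [← h]; exact Function.update_eq_self x ω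
      constructor
      · rintro ⟨hφ, hn⟩
        exact absurd ⟨Or.inl h, by rw [e]; exact hφ⟩ hn
      · rintro ⟨h', _⟩
        rw [h] at h'; simp at h'
    · have e : Function.update ω x (!b) = ω := by rw [← h]; exact Function.update_eq_self x ω
      constructor
      · rintro ⟨hφ, hn⟩
        refine ⟨h, hφ, fun hc => hn ⟨Or.inr (by rw [e]; exact hφ), hc⟩⟩
      · rintro ⟨_, hφ, hc⟩
        refine ⟨hφ, fun hf => hc hf.2⟩
end

section
/- Universal quantification of a literal ℓ from a formula φ equals φ conjoined with the negations of the antecedents of all b-rules of φ inferring ¬ℓ: ∀ℓ·φ ≡ φ ∧ ⋀_{(α → ¬ℓ) ∈ R(φ)} ¬α. -/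
variable {V : Type*} [Fintype V] [DecidableEq V]

/-- `∀ℓ·φ ≡ φ ∧ ⋀_{(α → ¬ℓ) ∈ R(φ)} ¬α` for `ℓ = (x, b)`: a world satisfies `∀ℓ·φ` iff it
satisfies `φ` and, for each b-rule of `φ` inferring `¬ℓ`, it falsifies the antecedent,
i.e. it disagrees with it on some variable other than `x`. -/
theorem forallLit_syntactic (φ : (V → Bool) → Prop) (x : V) (b : Bool) :
    ∀ ω : V → Bool, forallLit φ x b ω ↔
      (φ ω ∧ ∀ ω' : V → Bool, ω' x = !b → HasBRule φ ω' x →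
        ∃ y : V, y ≠ x ∧ ω y ≠ ω' y) := by
  intro ω
  constructor
  · rintro ⟨h1, h2⟩
    have hφ : φ ω := by
      by_cases hb : ω x = b
      · have : Function.update ω x b = ω := by rw [← hb]; exact Function.update_eq_self x ω
        rwa [this] at h2
      · rcases h1 with hb' | h
        · exact absurd hb' hb
        · have hb' : ω x = !b := by
            cases b <;> cases hω : ω x <;> simp_all
          have : Function.update ω x (!b) = ω := by
            rw [← hb']; exact Function.update_eq_self x ω
          rwa [this] at h
    refine ⟨hφ, fun ω' hx' ⟨hω', hflip⟩ => ?_⟩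
    by_contra hcon
    push_neg at hcon
    have heq : flipAt ω' x = Function.update ω x b := by
      funext y
      by_cases hy : y = x
      · subst hy; simp [flipAt, hx']
      · simp [flipAt, Function.update_of_ne hy, (hcon y hy).symm]
    exact hflip (heq ▸ h2)
  · rintro ⟨hφ, hrule⟩
    by_cases hb : ω x = b
    · have : Function.update ω x b = ω := by rw [← hb]; exact Function.update_eq_self x ω
      exact ⟨Or.inl hb, by rw [this]; exact hφ⟩
    · have hb' : ω x = !b := by cases b <;> cases hω : ω x <;> simp_all
      have hself : Function.update ω x (!b) = ω := by
        rw [← hb']; exact Function.update_eq_self x ω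
      refine ⟨Or.inr (by rw [hself]; exact hφ), ?_⟩
      by_contra hne
      have : flipAt ω x = Function.update ω x b := by
        funext y
        by_cases hy : y = x
        · subst hy; simp [flipAt, hb']
        · simp [flipAt, Function.update_of_ne hy]
      obtain ⟨y, _, hy2⟩ := hrule ω hb' ⟨hφ, this ▸ hne⟩
      exact hy2 rfl
end

section
/- ∀ℓ·φ is (up to logical equivalence) the logically weakest formula that is independent of the literal ¬ℓ and entails φ. -/
variable {V : Type*} [Fintype V] [DecidableEq V]

/-- `∀ℓ·φ` is the logically weakest formula that is independent of `¬ℓ` and entails `φ`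
(for `ℓ = (x, b)`, so `¬ℓ = (x, !b)`). -/
theorem forallLit_weakest (φ : (V → Bool) → Prop) (x : V) (b : Bool) :
    IndepLit (forallLit φ x b) x (!b) ∧
    (∀ ω : V → Bool, forallLit φ x b ω → φ ω) ∧
    (∀ ψ : (V → Bool) → Prop, IndepLit ψ x (!b) → (∀ ω : V → Bool, ψ ω → φ ω) →
      ∀ ω : V → Bool, ψ ω → forallLit φ x b ω) := by
  refine ⟨?_, ?_, ?_⟩
  · intro ω hω ⟨h1, h2⟩
    refine ⟨?_, ?_⟩ <;> simp [Function.update_idem, h2]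
  · intro ω ⟨h1, h2⟩
    rcases Bool.eq_or_eq_not (ω x) b with h | h
    · rwa [← h, Function.update_eq_self] at h2
    · rcases h1 with h1 | h1
      · exact absurd h1 (by simp [h])
      · rwa [← h, Function.update_eq_self] at h1
  · intro ψ hind hent ω hψ
    rcases Bool.eq_or_eq_not (ω x) b with h | h
    · refine ⟨Or.inl h, ?_⟩
      rw [← h, Function.update_eq_self]
      exact hent ω hψ
    · have h2 := hind ω h hψ
      simp only [Bool.not_not] at h2
      refine ⟨Or.inr ?_, hent _ h2⟩
      rw [← h, Function.update_eq_self]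
      exact hent ω hψ
end

section
/- Universal literal quantifications commute: for any literals ℓ₁, ℓ₂ (possibly of the same variable) and formula φ, ∀ℓ₁(∀ℓ₂·φ) is logically equivalent to ∀ℓ₂(∀ℓ₁·φ). -/
variable {V : Type*} [Fintype V] [DecidableEq V]

/-- Universal literal quantifications commute (the literals may be of the same variable). -/
theorem forallLit_comm (φ : (V → Bool) → Prop) (x₁ : V) (b₁ : Bool) (x₂ : V) (b₂ : Bool) :
    ∀ ω : V → Bool,
      forallLit (forallLit φ x₂ b₂) x₁ b₁ ω ↔ forallLit (forallLit φ x₁ b₁) x₂ b₂ ω := by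
  intro ω
  by_cases h : x₁ = x₂
  · subst h
    simp only [forallLit, Function.update_idem, Function.update_self]
    cases b₁ <;> cases b₂ <;> simp <;> tauto
  · simp only [forallLit, Function.update_of_ne h, Function.update_of_ne (Ne.symm h),
      Function.update_comm h]
    tauto
end

section
/- Universal variable quantification equals successive universal quantification of both literals of the variable: ∀X·φ ≡ ∀x(∀¬x·φ) ≡ ∀¬x(∀x·φ). -/
variable {V : Type*} [Fintype V] [DecidableEq V]

/-- `∀X·φ ≡ ∀x(∀¬x·φ) ≡ ∀¬x(∀x·φ)`, where `x` is the positive literal of variable `X`. -/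
theorem forallVar_eq_forallLits (φ : (V → Bool) → Prop) (x : V) :
    (∀ ω : V → Bool,
      (φ (Function.update ω x true) ∧ φ (Function.update ω x false)) ↔
        forallLit (forallLit φ x false) x true ω) ∧
    (∀ ω : V → Bool,
      (φ (Function.update ω x true) ∧ φ (Function.update ω x false)) ↔
        forallLit (forallLit φ x true) x false ω) := by
  constructor <;> intro ω <;>
    simp [forallLit, Function.update_idem, Function.update_self] <;> tauto
end

section
/- Let φ be a formula, ℓ₁,…,ℓₙ literals, ω a world, and α = ω ∩ {¬ℓ₁,…,¬ℓₙ}. Then ω satisfies ∀ℓ₁,…,ℓₙ·φ if and only if ω is an α-independent model of φ, i.e., α ⊆ ω and ω \ α (viewed as a term) entails φ. -/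
variable {V : Type*} [Fintype V] [DecidableEq V]

/-- Selection semantics: `ω ⊨ ∀ℓ₁,…,ℓₙ·φ` iff `ω` is an `α`-independent model of `φ`,
where `α = ω ∩ {¬ℓ₁,…,¬ℓₙ}`; i.e. every world agreeing with `ω` on all variables whose
literal in `ω` is not among the `¬ℓᵢ` satisfies `φ`. -/
theorem forallLits_semantics (φ : (V → Bool) → Prop) (L : List (V × Bool)) (ω : V → Bool) :
    forallLits φ L ω ↔
      ∀ ω' : V → Bool, (∀ y : V, (y, !(ω y)) ∉ L → ω' y = ω y) → φ ω' := by
  induction L generalizing ω with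
  | nil =>
    constructor
    · intro h ω' h'
      have : ω' = ω := funext fun y => h' y (by simp)
      rwa [this]
    · intro h
      exact h ω (fun y _ => rfl)
  | cons p L IH =>
    obtain ⟨x, b⟩ := p
    show forallLit (forallLits φ L) x b ω ↔ _
    unfold forallLit
    constructor
    · rintro ⟨h1, h2⟩ ω' hcond
      by_cases hx : ω x = b
      · have hupd : Function.update ω x b = ω := by rw [← hx, Function.update_eq_self]
        rw [hupd] at h2
        refine (IH ω).mp h2 ω' ?_
        intro y hy
        refine hcond y ?_
        simp only [List.mem_cons, not_or]
        refine ⟨?_, hy⟩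
        intro hc
        have : y = x := congrArg Prod.fst hc
        subst this
        have : (!(ω y)) = b := congrArg Prod.snd hc
        rw [hx] at this
        simp at this
      · have hx' : ω x = !b := by cases b <;> cases h : ω x <;> simp_all
        have hupd : Function.update ω x (!b) = ω := by rw [← hx', Function.update_eq_self]
        rw [hupd] at h1
        have h1' : forallLits φ L ω := h1.resolve_left hx
        by_cases hωx : ω' x = ω x
        · refine (IH ω).mp h1' ω' ?_
          intro y hy
          by_cases hyx : y = x
          · subst hyx; exact hωx
          · refine hcond y ?_
            simp only [List.mem_cons, not_or]
            exact ⟨fun hc => hyx (congrArg Prod.fst hc), hy⟩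
        · have hωx' : ω' x = b := by
            rw [hx'] at hωx; cases b <;> cases h : ω' x <;> simp_all
          refine (IH (Function.update ω x b)).mp h2 ω' ?_
          intro y hy
          by_cases hyx : y = x
          · subst hyx; simp [hωx']
          · rw [Function.update_of_ne hyx] at hy ⊢
            refine hcond y ?_
            simp only [List.mem_cons, not_or]
            exact ⟨fun hc => hyx (congrArg Prod.fst hc), hy⟩
    · intro H
      constructor
      · by_cases hx : ω x = b
        · exact Or.inl hx
        · have hx' : ω x = !b := by cases b <;> cases h : ω x <;> simp_all
          have hupd : Function.update ω x (!b) = ω := by rw [← hx', Function.update_eq_self]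
          rw [hupd]
          refine Or.inr ((IH ω).mpr ?_)
          intro ω' hcond
          refine H ω' ?_
          intro y hy
          exact hcond y (fun hc => hy (List.mem_cons_of_mem _ hc))
      · refine (IH (Function.update ω x b)).mpr ?_
        intro ω' hcond
        refine H ω' ?_
        intro y hy
        simp only [List.mem_cons, not_or] at hy
        obtain ⟨hy1, hy2⟩ := hy
        by_cases hyx : y = x
        · subst hyx
          have hx : ω y = b := by
            by_contra h
            exact hy1 (by
              have : (!(ω y)) = b := by cases b <;> cases hh : ω y <;> simp_all
              rw [this])
          have := hcond y (by rw [Function.update_self, ← hx]; exact hy2)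
          rw [Function.update_self] at this
          rw [this, hx]
        · have := hcond y (by rw [Function.update_of_ne hyx]; exact hy2)
          rw [Function.update_of_ne hyx] at this
          exact this
end

section
/- Let ω = α ∪ β be a model of formula φ, where α and β partition the literals of ω. Then ω is an α-independent model of φ if and only if φ has no b-rule whose antecedent contains β (i.e., no rule of the form (β ∪ γ → ℓ)). -/
variable {V : Type*} [Fintype V] [DecidableEq V]

/-- Let `ω ⊨ φ`, with its literals partitioned into `α` (on variables in `A`) and `β`
(on variables outside `A`). Then `ω` is an `α`-independent model of `φ` iff `φ` has no
b-rule whose antecedent contains `β`, i.e. no rule `(β, γ → ℓ)`. -/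
theorem alphaIndep_iff_no_brule (φ : (V → Bool) → Prop) (ω : V → Bool) (A : Set V)
    (hω : φ ω) :
    (∀ ω' : V → Bool, (∀ y : V, y ∉ A → ω' y = ω y) → φ ω') ↔
      ∀ (ω' : V → Bool) (x : V), x ∈ A → (∀ y : V, y ∉ A → ω' y = ω y) →
        ¬ HasBRule φ ω' x := by
  constructor
  · intro h ω' x hx hagree hbr
    apply hbr.2
    apply h (flipAt ω' x)
    intro y hy
    have hne : y ≠ x := fun he => hy (he ▸ hx)
    simp [flipAt, Function.update_apply, hne]
    exact hagree y hy
  · intro h ω' hagree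
    have key : ∀ n (ω' : V → Bool), (Finset.univ.filter (fun z => ω' z ≠ ω z)).card = n →
        (∀ y, y ∉ A → ω' y = ω y) → φ ω' := by
      intro n
      induction n with
      | zero =>
        intro ω' hc _
        have : ω' = ω := by
          funext z; by_contra hne
          have hz : z ∈ Finset.univ.filter (fun z => ω' z ≠ ω z) := by simp [hne]
          rw [Finset.card_eq_zero] at hc
          rw [hc] at hz; simp at hz
        rw [this]; exact hω
      | succ n ih =>
        intro ω' hc hagree
        obtain ⟨x, hx⟩ : ∃ x, ω' x ≠ ω x := by
          by_contra hno; push_neg at hno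
          have he : (Finset.univ.filter (fun z => ω' z ≠ ω z)) = ∅ := by
            ext z; simp [hno]
          rw [he] at hc; simp at hc
        have hxA : x ∈ A := by
          by_contra hxA; exact hx (hagree x hxA)
        set ω'' := Function.update ω' x (ω x) with hω''
        have hagree'' : ∀ y, y ∉ A → ω'' y = ω y := by
          intro y hy
          rw [hω'', Function.update_apply]
          split
          · next heq => subst heq; rfl
          · exact hagree y hy
        have hcard : (Finset.univ.filter (fun z => ω'' z ≠ ω z)).card = n := by
          have hset : Finset.univ.filter (fun z => ω'' z ≠ ω z)
              = (Finset.univ.filter (fun z => ω' z ≠ ω z)).erase x := by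
            ext z
            by_cases hz : z = x
            · subst hz; simp [hω'']
            · simp [hω'', Function.update_apply, hz]
          rw [hset, Finset.card_erase_of_mem (by simp [hx]), hc]
          simp
        have hφ'' := ih ω'' hcard hagree''
        by_contra hφ'
        apply h ω'' x hxA hagree''
        refine ⟨hφ'', ?_⟩
        have hflip : flipAt ω'' x = ω' := by
          funext z
          by_cases hz : z = x
          · subst hz
            simp only [flipAt, hω'', Function.update_apply, if_pos rfl,
              Function.update_self]
            cases h1 : ω' z <;> cases h2 : ω z <;> simp_all
          · simp [flipAt, hω'', Function.update_apply, hz]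
        rw [hflip]; exact hφ'
    exact key _ ω' rfl hagree
end

section
/- For formula φ and literal ℓ: every model of φ is a model of ∃ℓ·φ, and a world ω is a model of ∃ℓ·φ but not of φ if and only if ω is a ¬ℓ-boundary model of ¬φ. -/
variable {V : Type*} [Fintype V] [DecidableEq V]

/-- Every model of `φ` is a model of `∃ℓ·φ`; moreover `ω ⊨ ∃ℓ·φ` and `ω ⊭ φ` iff `ω` is a
`¬ℓ`-boundary model of `¬φ` (for `ℓ = (x, b)`). -/
theorem existsLit_semantics (φ : (V → Bool) → Prop) (x : V) (b : Bool) :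
    (∀ ω : V → Bool, φ ω → existsLit φ x b ω) ∧
    (∀ ω : V → Bool, (existsLit φ x b ω ∧ ¬ φ ω) ↔
      (ω x = !b ∧ ¬ φ ω ∧ φ (Function.update ω x b))) := by
  have key : ∀ ω : V → Bool, ω x = b → Function.update ω x b = ω := by
    intro ω h; funext y; by_cases hy : y = x <;> simp [Function.update, hy, h]
  have key2 : ∀ ω : V → Bool, ω x = !b → Function.update ω x (!b) = ω := by
    intro ω h; funext y; by_cases hy : y = x <;> simp [Function.update, hy, h]
  constructor
  · intro ω hφ
    by_cases h : ω x = b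
    · exact Or.inl (by rwa [key ω h])
    · have h' : ω x = !b := by cases hb : ω x <;> cases b <;> simp_all
      exact Or.inr ⟨h', by rwa [key2 ω h']⟩
  · intro ω
    constructor
    · rintro ⟨he, hn⟩
      by_cases h : ω x = b
      · rcases he with h1 | ⟨h2, h3⟩
        · rw [key ω h] at h1; exact absurd h1 hn
        · rw [h] at h2; exact absurd h2 (by cases b <;> simp)
      · have h' : ω x = !b := by cases hb : ω x <;> cases b <;> simp_all
        rcases he with h1 | ⟨h2, h3⟩
        · exact ⟨h', hn, h1⟩
        · rw [key2 ω h'] at h3; exact absurd h3 hn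
    · rintro ⟨h1, h2, h3⟩
      exact ⟨Or.inl h3, h2⟩
end

section
/- Existentially quantifying literal ℓ from φ equals φ disjoined with the antecedents of the b-rules of φ inferring ℓ: ∃ℓ·φ ≡ φ ∨ ⋁_{(α → ℓ) ∈ R(φ)} α. -/
variable {V : Type*} [Fintype V] [DecidableEq V]

/-- `∃ℓ·φ ≡ φ ∨ ⋁_{(α → ℓ) ∈ R(φ)} α` for `ℓ = (x, b)`: a world satisfies `∃ℓ·φ` iff it
satisfies `φ` or the antecedent of some b-rule of `φ` inferring `ℓ`, i.e. it agrees off `x`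
with some `ℓ`-boundary model of `φ`. -/
theorem existsLit_syntactic (φ : (V → Bool) → Prop) (x : V) (b : Bool) :
    ∀ ω : V → Bool, existsLit φ x b ω ↔
      (φ ω ∨ ∃ ω' : V → Bool, ω' x = b ∧ HasBRule φ ω' x ∧
        ∀ y : V, y ≠ x → ω y = ω' y) := by
  intro ω
  have hupd : ∀ c : Bool, ω x = c → Function.update ω x c = ω := by
    intro c hc; funext y
    by_cases hy : y = x
    · subst hy; simp [hc]
    · simp [Function.update_of_ne hy]
  constructor
  · rintro (h | ⟨hx, h⟩)
    · by_cases hωx : ω x = b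
      · left; rwa [hupd b hωx] at h
      · by_cases hφ : φ ω
        · left; exact hφ
        · right
          refine ⟨Function.update ω x b, by simp, ⟨h, ?_⟩, ?_⟩
          · have hωx' : ω x = !b := by cases b <;> cases h' : ω x <;> simp_all
            have : flipAt (Function.update ω x b) x = ω := by
              funext y
              by_cases hy : y = x
              · subst hy; simp [flipAt, hωx']
              · simp [flipAt, Function.update_of_ne hy]
            rw [this]; exact hφ
          · intro y hy; simp [Function.update_of_ne hy]
    · left; rwa [hupd _ hx] at h
  · rintro (h | ⟨ω', hx', ⟨hφ', _⟩, hag⟩)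
    · by_cases hωx : ω x = b
      · left; rwa [hupd b hωx]
      · right
        have hωx' : ω x = !b := by cases b <;> cases h' : ω x <;> simp_all
        exact ⟨hωx', by rwa [hupd _ hωx']⟩
    · left
      have : Function.update ω x b = ω' := by
        funext y
        by_cases hy : y = x
        · subst hy; simp [hx'.symm]
        · rw [Function.update_of_ne hy]; exact hag y hy
      rwa [this]
end

section
/- For a CNF Δ and literal ℓ: (i) ∀ℓ·Δ is obtained from Δ by removing the literal ¬ℓ from every clause; (ii) if Δ is closed under resolution on the variable of ℓ, then ∃ℓ·Δ is obtained from Δ by removing every clause that contains ℓ. -/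
variable {V : Type*} [Fintype V] [DecidableEq V]

private lemma bool_eq_not_of_ne {a b : Bool} (h : a ≠ b) : a = !b := by
  cases a <;> cases b <;> simp_all

/-- For a CNF `Δ` (a finite set of clauses, each a finite set of literals over distinct
variables) and literal `ℓ = (x, b)`:
(i) `∀ℓ·Δ` is the CNF obtained by removing `¬ℓ` from every clause;
(ii) if `Δ` is closed under resolution on the variable of `ℓ`, then `∃ℓ·Δ` is the CNF
obtained by removing every clause containing `ℓ`. -/
theorem cnf_lit_quantification (Δ : Finset (Finset (V × Bool)))
    (hclause : ∀ C ∈ Δ, ∀ p ∈ C, ∀ q ∈ C, p.1 = q.1 → p = q)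
    (x : V) (b : Bool) :
    (∀ ω : V → Bool,
      forallLit (fun ω => ∀ C ∈ Δ, ∃ p ∈ C, ω p.1 = p.2) x b ω ↔
        ∀ C ∈ Δ, ∃ p ∈ C.erase (x, !b), ω p.1 = p.2) ∧
    ((∀ C₁ ∈ Δ, ∀ C₂ ∈ Δ, (x, true) ∈ C₁ → (x, false) ∈ C₂ →
        (∀ (y : V) (c : Bool),
          (y, c) ∈ C₁.erase (x, true) → (y, !c) ∉ C₂.erase (x, false)) →
        C₁.erase (x, true) ∪ C₂.erase (x, false) ∈ Δ) →
      ∀ ω : V → Bool,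
        existsLit (fun ω => ∀ C ∈ Δ, ∃ p ∈ C, ω p.1 = p.2) x b ω ↔
          ∀ C ∈ Δ, (x, b) ∉ C → ∃ p ∈ C, ω p.1 = p.2) := by
  constructor
  · intro ω
    constructor
    · rintro ⟨h1, h2⟩ C hC
      rcases eq_or_ne (ω x) b with hb | hb
      · have hupd : Function.update ω x b = ω := by rw [← hb]; exact Function.update_eq_self x ω
        rw [hupd] at h2
        obtain ⟨p, hp, hv⟩ := h2 C hC
        refine ⟨p, Finset.mem_erase.2 ⟨?_, hp⟩, hv⟩
        rintro rfl
        rw [hb] at hv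
        simp at hv
      · have hb' : ω x = !b := bool_eq_not_of_ne hb
        have hupd : Function.update ω x (!b) = ω := by
          rw [← hb']; exact Function.update_eq_self x ω
        rw [hupd] at h1
        rcases h1 with h1 | h1
        · exact absurd h1 hb
        obtain ⟨p, hp, hv⟩ := h1 C hC
        by_cases hpx : p = (x, !b)
        · obtain ⟨q, hq, hqv⟩ := h2 C hC
          rcases eq_or_ne q.1 x with hqx | hqx
          · exfalso
            rw [hqx, Function.update_self] at hqv
            have hq2 : q = (x, b) := Prod.ext hqx hqv.symm
            have := hclause C hC q hq p hp (by rw [hqx, hpx])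
            rw [hpx, hq2] at this
            simp at this
          · refine ⟨q, Finset.mem_erase.2 ⟨?_, hq⟩, ?_⟩
            · intro h; rw [h] at hqx; simp at hqx
            · rwa [Function.update_of_ne hqx] at hqv
        · exact ⟨p, Finset.mem_erase.2 ⟨hpx, hp⟩, hv⟩
    · intro h
      have h2 : ∀ C ∈ Δ, ∃ p ∈ C, (Function.update ω x b) p.1 = p.2 := by
        intro C hC
        obtain ⟨p, hp, hv⟩ := h C hC
        obtain ⟨hpne, hpC⟩ := Finset.mem_erase.1 hp
        refine ⟨p, hpC, ?_⟩
        rcases eq_or_ne p.1 x with hpx | hpx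
        · have hp2 : p.2 = b := by
            by_contra hp2
            exact hpne (Prod.ext hpx (bool_eq_not_of_ne hp2))
          rw [hpx, Function.update_self, hp2]
        · rwa [Function.update_of_ne hpx]
      refine ⟨?_, h2⟩
      rcases eq_or_ne (ω x) b with hb | hb
      · exact Or.inl hb
      · have hb' : ω x = !b := bool_eq_not_of_ne hb
        have hupd : Function.update ω x (!b) = ω := by
          rw [← hb']; exact Function.update_eq_self x ω
        refine Or.inr ?_
        rw [hupd]
        intro C hC
        obtain ⟨p, hp, hv⟩ := h C hC
        exact ⟨p, (Finset.mem_erase.1 hp).2, hv⟩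
  · intro hres ω
    constructor
    · rintro (h | ⟨hx, h⟩) C hC hCb
      · obtain ⟨p, hp, hv⟩ := h C hC
        refine ⟨p, hp, ?_⟩
        rcases eq_or_ne p.1 x with hpx | hpx
        · exfalso
          rw [hpx, Function.update_self] at hv
          have hpe : p = (x, b) := Prod.ext hpx hv.symm
          exact hCb (hpe ▸ hp)
        · rwa [Function.update_of_ne hpx] at hv
      · have hupd : Function.update ω x (!b) = ω := by
          rw [← hx]; exact Function.update_eq_self x ω
        rw [hupd] at h
        exact h C hC
    · intro h
      by_contra hcon
      simp only [existsLit, not_or, not_and] at hcon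
      obtain ⟨h1, h2⟩ := hcon
      push_neg at h1
      obtain ⟨C₁, hC₁, hA⟩ := h1
      -- (x, b) ∉ C₁
      have hxbC₁ : (x, b) ∉ C₁ := by
        intro hmem
        exact hA (x, b) hmem (by simp)
      obtain ⟨p, hp, hv⟩ := h C₁ hC₁ hxbC₁
      have hpx : p.1 = x := by
        by_contra hpx
        exact hA p hp (by rwa [Function.update_of_ne hpx])
      have hp2 : p.2 = !b := by
        have hne : p.2 ≠ b := by
          intro hh
          exact hA p hp (by rw [hpx, Function.update_self, hh])
        exact bool_eq_not_of_ne hne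
      have hωx : ω x = !b := by rw [← hpx, hv, hp2]
      have hxnbC₁ : (x, !b) ∈ C₁ := by
        have : p = (x, !b) := Prod.ext hpx hp2
        rwa [this] at hp
      -- second disjunct
      push_neg at h2
      obtain ⟨C₂, hC₂, hB⟩ := h2 hωx
      have hupd : Function.update ω x (!b) = ω := by
        rw [← hωx]; exact Function.update_eq_self x ω
      rw [hupd] at hB
      have hxbC₂ : (x, b) ∈ C₂ := by
        by_contra hxbC₂
        obtain ⟨q, hq, hqv⟩ := h C₂ hC₂ hxbC₂
        exact hB q hq hqv
      -- falsity facts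
      have hC1false : ∀ q ∈ C₁.erase (x, !b), ω q.1 ≠ q.2 := by
        intro q hq
        obtain ⟨hqne, hqC⟩ := Finset.mem_erase.1 hq
        have hqx : q.1 ≠ x := by
          intro hqx
          exact hqne (hclause C₁ hC₁ q hqC (x, !b) hxnbC₁ hqx)
        intro hqv
        exact hA q hqC (by rwa [Function.update_of_ne hqx])
      have hC2false : ∀ q ∈ C₂.erase (x, b), ω q.1 ≠ q.2 := fun q hq =>
        hB q (Finset.mem_erase.1 hq).2
      have hcomp₁ : ∀ y c, (y, c) ∈ C₁.erase (x, !b) → (y, !c) ∉ C₂.erase (x, b) := by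
        intro y c h1' h2'
        exact hC2false (y, !c) h2' (bool_eq_not_of_ne (hC1false (y, c) h1'))
      have hcomp₂ : ∀ y c, (y, c) ∈ C₂.erase (x, b) → (y, !c) ∉ C₁.erase (x, !b) := by
        intro y c h1' h2'
        exact hC1false (y, !c) h2' (bool_eq_not_of_ne (hC2false (y, c) h1'))
      have hR : C₁.erase (x, !b) ∪ C₂.erase (x, b) ∈ Δ := by
        cases b
        · simpa using hres C₁ hC₁ C₂ hC₂ (by simpa using hxnbC₁) (by simpa using hxbC₂)
            (fun y c h1' h2' => hcomp₁ y c (by simpa using h1') (by simpa using h2'))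
        · rw [Finset.union_comm]
          simpa using hres C₂ hC₂ C₁ hC₁ (by simpa using hxbC₂) (by simpa using hxnbC₁)
            (fun y c h1' h2' => hcomp₂ y c (by simpa using h1') (by simpa using h2'))
      have hnotin : (x, b) ∉ C₁.erase (x, !b) ∪ C₂.erase (x, b) := by
        intro hmem
        rcases Finset.mem_union.1 hmem with hmem | hmem
        · obtain ⟨hne, hmem⟩ := Finset.mem_erase.1 hmem
          exact hne (hclause C₁ hC₁ (x, b) hmem (x, !b) hxnbC₁ rfl)
        · exact (Finset.mem_erase.1 hmem).1 rfl
      obtain ⟨q, hq, hqv⟩ := h _ hR hnotin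
      rcases Finset.mem_union.1 hq with hq' | hq'
      · exact hC1false q hq' hqv
      · exact hC2false q hq' hqv
end
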